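/- Let G be a group and x, y elements of G of finite orders n = o(x) and m = o(y). Then there exist conjugates of g = xy in G, specifically at most lcm(n,m) of them, whose product is the identity; i.e. the generalized order e(xy) satisfies e(xy) ≤ lcm(o(x), o(y)). -/
import Mathlib


/-- The generalized order of `g`: the smallest positive `k` such that some product of
`k` conjugates of `g` equals the identity. -/
noncomputable def genOrder {G : Type*} [Group G] (g : G) : ℕ :=
  sInf {k | 0 < k ∧ ∃ l : List G, l.length = k ∧ (l.map fun x => x⁻¹ * g * x).prod = 1}

lemma telescope_conj {G : Type*} [Group G] (x y : G) (L : ℕ) :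
    ((List.range L).map (fun i => (y ^ i)⁻¹ * (x * y) * y ^ i)).prod = x ^ L * y ^ L := by
  induction L with
  | zero => simp
  | succ n ih =>
    rw [List.range_succ, List.map_append, List.prod_append, ih]
    simp only [List.map_cons, List.map_nil, List.prod_cons, List.prod_nil, mul_one,
      pow_succ]
    group

theorem stmt0 {G : Type*} [Group G] (x y : G)
    (hx : IsOfFinOrder x) (hy : IsOfFinOrder y) :
    genOrder (x * y) ≤ Nat.lcm (orderOf x) (orderOf y) := by
  set L := Nat.lcm (orderOf x) (orderOf y) with hL
  have hxpos : 0 < orderOf x := hx.orderOf_pos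
  have hypos : 0 < orderOf y := hy.orderOf_pos
  have hLpos : 0 < L := Nat.pos_of_ne_zero (by
    simp [hL, Nat.lcm_ne_zero hxpos.ne' hypos.ne'])
  apply Nat.sInf_le
  refine ⟨hLpos, (List.range L).map (fun i => y ^ i), by simp, ?_⟩
  rw [List.map_map]
  have : ((fun a => a⁻¹ * (x * y) * a) ∘ fun i => y ^ i) =
      fun i => (y ^ i)⁻¹ * (x * y) * y ^ i := rfl
  rw [this, telescope_conj]
  have h1 : x ^ L = 1 := orderOf_dvd_iff_pow_eq_one.mp (Nat.dvd_lcm_left _ _)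
  have h2 : y ^ L = 1 := orderOf_dvd_iff_pow_eq_one.mp (Nat.dvd_lcm_right _ _)
  rw [h1, h2, one_mul]
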